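/- Let p > 2 and s > 0, and consider the system in (t_−, t_+) ∈ (0,1)²: t_+(1−t_+²)^{1/(p−2)} = t_−(1−t_−²)^{1/(p−2)} and 1/t_+ + 1/t_− = s. Then: (a) if s ≤ 2 the system has no solutions; (b) if 2 < s ≤ 2√(p/(p−2)) the system has exactly one solution, namely t_− = t_+ = 2/s; (c) if s > 2√(p/(p−2)) the system has exactly three solutions: t_− = t_+ = 2/s and two further solutions of the form (t₁, t₂), (t₂, t₁) with t₁ ≠ t₂. -/

import Mathlib

open Set Filter Topology

/-- The system in `(t₋, t₊) ∈ (0,1)²`: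
`t₊(1−t₊²)^{1/(p−2)} = t₋(1−t₋²)^{1/(p−2)}` and `1/t₊ + 1/t₋ = s`. -/
def SignSys (p s tm tp : ℝ) : Prop :=
  tm ∈ Ioo (0 : ℝ) 1 ∧ tp ∈ Ioo (0 : ℝ) 1 ∧
    tp * (1 - tp ^ 2) ^ (1 / (p - 2)) = tm * (1 - tm ^ 2) ^ (1 / (p - 2)) ∧
    1 / tp + 1 / tm = s

noncomputable def Lf (p u : ℝ) : ℝ :=
  (1 / (p - 2)) * Real.log (u ^ 2 - 1) - (1 + 2 / (p - 2)) * Real.log u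

noncomputable def Gf (p s u : ℝ) : ℝ := Lf p u - Lf p (s - u)

lemma F_eq_exp (p : ℝ) (hp : 2 < p) {t : ℝ} (ht : t ∈ Ioo (0 : ℝ) 1) :
    t * (1 - t ^ 2) ^ (1 / (p - 2)) = Real.exp (Lf p (1 / t)) := by
  have ht0 : 0 < t := ht.1
  have ht1 : t < 1 := ht.2
  have h1 : 0 < 1 - t ^ 2 := by nlinarith
  have ht0' : t ≠ 0 := ne_of_gt ht0
  rw [Real.rpow_def_of_pos h1]
  have hLf : Lf p (1 / t) = Real.log t + Real.log (1 - t ^ 2) * (1 / (p - 2)) := by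
    unfold Lf
    have e1 : (1 / t) ^ 2 - 1 = (1 - t ^ 2) / t ^ 2 := by
      field_simp
    have e2 : Real.log (1 / t) = -Real.log t := by
      rw [Real.log_div one_ne_zero ht0', Real.log_one]; ring
    rw [e1, Real.log_div (ne_of_gt h1) (pow_ne_zero 2 ht0'), Real.log_pow, e2]
    push_cast
    ring
  rw [hLf, Real.exp_add, Real.exp_log ht0]

lemma signSys_iff_u (p s : ℝ) (hp : 2 < p) (tm tp : ℝ) :
    SignSys p s tm tp ↔
      ∃ u v : ℝ, 1 < u ∧ 1 < v ∧ v + u = s ∧ Lf p v = Lf p u ∧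
        tm = 1 / u ∧ tp = 1 / v := by
  constructor
  · rintro ⟨htm, htp, hF, hsum⟩
    refine ⟨1 / tm, 1 / tp, ?_, ?_, hsum, ?_, ?_, ?_⟩
    · rw [lt_div_iff₀ htm.1]; linarith [htm.2]
    · rw [lt_div_iff₀ htp.1]; linarith [htp.2]
    · have h1 := F_eq_exp p hp htm
      have h2 := F_eq_exp p hp htp
      exact Real.exp_injective (by rw [← h2, ← h1, hF])
    · rw [one_div_one_div]
    · rw [one_div_one_div]
  · rintro ⟨u, v, hu, hv, hsum, hL, rfl, rfl⟩
    have hu0 : 0 < u := lt_trans one_pos hu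
    have hv0 : 0 < v := lt_trans one_pos hv
    have htm : 1 / u ∈ Ioo (0 : ℝ) 1 := ⟨by positivity, by rw [div_lt_one hu0]; exact hu⟩
    have htp : 1 / v ∈ Ioo (0 : ℝ) 1 := ⟨by positivity, by rw [div_lt_one hv0]; exact hv⟩
    refine ⟨htm, htp, ?_, ?_⟩
    · rw [F_eq_exp p hp htm, F_eq_exp p hp htp, one_div_one_div, one_div_one_div, hL]
    · rw [one_div_one_div, one_div_one_div]; exact hsum

lemma signSys_symm {p s tm tp : ℝ} (h : SignSys p s tm tp) : SignSys p s tp tm := by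
  obtain ⟨h1, h2, h3, h4⟩ := h
  exact ⟨h2, h1, h3.symm, by rw [add_comm]; exact h4⟩

lemma hasDerivAt_Lf (p : ℝ) (hp : 2 < p) {u : ℝ} (hu : 1 < u) :
    HasDerivAt (Lf p) (((1 + 2 / (p - 2)) - u ^ 2) / (u * (u ^ 2 - 1))) u := by
  have hu0 : 0 < u := lt_trans one_pos hu
  have h1 : 0 < u ^ 2 - 1 := by nlinarith
  have hp2 : p - 2 ≠ 0 := by linarith
  have hlog1 : HasDerivAt (fun x : ℝ => Real.log (x ^ 2 - 1)) ((2 * u) / (u ^ 2 - 1)) u := by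
    have hin : HasDerivAt (fun x : ℝ => x ^ 2 - 1) (2 * u) u := by
      simpa using (hasDerivAt_pow 2 u).sub_const 1
    simpa using hin.log (ne_of_gt h1)
  have hlog2 : HasDerivAt Real.log u⁻¹ u := Real.hasDerivAt_log (ne_of_gt hu0)
  have h := (hlog1.const_mul (1 / (p - 2))).sub (hlog2.const_mul (1 + 2 / (p - 2)))
  have he : (1 / (p - 2)) * ((2 * u) / (u ^ 2 - 1)) - (1 + 2 / (p - 2)) * u⁻¹
      = ((1 + 2 / (p - 2)) - u ^ 2) / (u * (u ^ 2 - 1)) := by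
    field_simp
    ring
  rw [he] at h
  exact h

lemma hasDerivAt_Gf (p s : ℝ) (hp : 2 < p) {u : ℝ} (hu : 1 < u) (hv : 1 < s - u) :
    HasDerivAt (Gf p s)
      (((1 + 2 / (p - 2)) - u ^ 2) / (u * (u ^ 2 - 1)) +
        ((1 + 2 / (p - 2)) - (s - u) ^ 2) / ((s - u) * ((s - u) ^ 2 - 1))) u := by
  have h1 := hasDerivAt_Lf p hp hu
  have hin : HasDerivAt (fun x : ℝ => s - x) (-1) u := by
    simpa using (hasDerivAt_id u).const_sub s
  have h2 : HasDerivAt (fun x : ℝ => Lf p (s - x))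
      ((((1 + 2 / (p - 2)) - (s - u) ^ 2) / ((s - u) * ((s - u) ^ 2 - 1))) * (-1)) u :=
    (hasDerivAt_Lf p hp hv).comp u hin
  have h := h1.sub h2
  have : (((1 + 2 / (p - 2)) - u ^ 2) / (u * (u ^ 2 - 1))) -
      ((((1 + 2 / (p - 2)) - (s - u) ^ 2) / ((s - u) * ((s - u) ^ 2 - 1))) * (-1))
      = ((1 + 2 / (p - 2)) - u ^ 2) / (u * (u ^ 2 - 1)) +
        ((1 + 2 / (p - 2)) - (s - u) ^ 2) / ((s - u) * ((s - u) ^ 2 - 1)) := by ring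
  rw [this] at h
  exact h

/-- algebraic identity for the sum of the two logarithmic derivatives -/
lemma deriv_sum_eq {c u v : ℝ} (hu : 1 < u) (hv : 1 < v) :
    (c - u ^ 2) / (u * (u ^ 2 - 1)) + (c - v ^ 2) / (v * (v ^ 2 - 1))
      = ((u + v) * (c * ((u + v) ^ 2 - 1) - (3 * c - 1) * (u * v) - (u * v) ^ 2)) /
        ((u * (u ^ 2 - 1)) * (v * (v ^ 2 - 1))) := by
  have hu0 : 0 < u := lt_trans one_pos hu
  have hv0 : 0 < v := lt_trans one_pos hv
  have h1 : u * (u ^ 2 - 1) ≠ 0 := ne_of_gt (by nlinarith)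
  have h2 : v * (v ^ 2 - 1) ≠ 0 := ne_of_gt (by nlinarith)
  rw [div_add_div _ _ h1 h2]
  congr 1
  ring


lemma deriv_Gf_pos (p s : ℝ) (hp : 2 < p) {u : ℝ} (hu : 1 < u) (hv : 1 < s - u)
    (hQ : 0 < (1 + 2 / (p - 2)) * (s ^ 2 - 1) - (3 * (1 + 2 / (p - 2)) - 1) * (u * (s - u)) -
      (u * (s - u)) ^ 2) :
    0 < deriv (Gf p s) u := by
  rw [(hasDerivAt_Gf p s hp hu hv).deriv, deriv_sum_eq hu hv,
    show u + (s - u) = s by ring]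
  apply div_pos
  · exact mul_pos (by nlinarith : (0:ℝ) < s) hQ
  · apply mul_pos
    · nlinarith
    · nlinarith

lemma deriv_Gf_neg (p s : ℝ) (hp : 2 < p) {u : ℝ} (hu : 1 < u) (hv : 1 < s - u)
    (hQ : (1 + 2 / (p - 2)) * (s ^ 2 - 1) - (3 * (1 + 2 / (p - 2)) - 1) * (u * (s - u)) -
      (u * (s - u)) ^ 2 < 0) :
    deriv (Gf p s) u < 0 := by
  rw [(hasDerivAt_Gf p s hp hu hv).deriv, deriv_sum_eq hu hv,
    show u + (s - u) = s by ring]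
  apply div_neg_of_neg_of_pos
  · exact mul_neg_of_pos_of_neg (by nlinarith : (0:ℝ) < s) hQ
  · apply mul_pos
    · nlinarith
    · nlinarith

lemma Gf_strictMonoOn (p s : ℝ) (hp : 2 < p) {w : ℝ} (hw1 : 1 < w) (hw2 : w ≤ s / 2)
    (hQ : ∀ u, 1 < u → u < w →
      0 < (1 + 2 / (p - 2)) * (s ^ 2 - 1) - (3 * (1 + 2 / (p - 2)) - 1) * (u * (s - u)) -
        (u * (s - u)) ^ 2) :
    StrictMonoOn (Gf p s) (Ioc 1 w) := by
  have hs2 : 2 < s := by linarith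
  apply strictMonoOn_of_deriv_pos (convex_Ioc 1 w)
  · intro x hx
    have h1 : 1 < x := hx.1
    have h2 : 1 < s - x := by have := hx.2; linarith
    exact ((hasDerivAt_Gf p s hp h1 h2).continuousAt).continuousWithinAt
  · rw [interior_Ioc]
    intro x hx
    exact deriv_Gf_pos p s hp hx.1 (by have := hx.2; linarith) (hQ x hx.1 hx.2)

lemma Gf_strictAntiOn (p s : ℝ) (hp : 2 < p) {a : ℝ} (ha : 1 < a) (hab : a ≤ s / 2)
    (hs2 : 2 < s)
    (hQ : ∀ u, a < u → u < s / 2 →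
      (1 + 2 / (p - 2)) * (s ^ 2 - 1) - (3 * (1 + 2 / (p - 2)) - 1) * (u * (s - u)) -
        (u * (s - u)) ^ 2 < 0) :
    StrictAntiOn (Gf p s) (Icc a (s / 2)) := by
  apply strictAntiOn_of_deriv_neg (convex_Icc a (s / 2))
  · intro x hx
    have h1 : 1 < x := lt_of_lt_of_le ha hx.1
    have h2 : 1 < s - x := by have := hx.2; linarith
    exact ((hasDerivAt_Gf p s hp h1 h2).continuousAt).continuousWithinAt
  · rw [interior_Icc]
    intro x hx
    have h1 : 1 < x := lt_trans ha hx.1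
    exact deriv_Gf_neg p s hp h1 (by have := hx.2; linarith) (hQ x hx.1 hx.2)

lemma Gf_half (p s : ℝ) : Gf p s (s / 2) = 0 := by
  unfold Gf
  rw [show s - s / 2 = s / 2 by ring, sub_self]

lemma Gf_tendsto_atBot (p s : ℝ) (hp : 2 < p) (hs2 : 2 < s) :
    Tendsto (Gf p s) (𝓝[>] (1 : ℝ)) atBot := by
  have hp2 : (0:ℝ) < p - 2 := by linarith
  have h1 : Tendsto (fun u : ℝ => u ^ 2 - 1) (𝓝[>] (1 : ℝ)) (𝓝[>] (0 : ℝ)) := by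
    rw [tendsto_nhdsWithin_iff]
    constructor
    · apply Tendsto.mono_left _ nhdsWithin_le_nhds
      have hc : ContinuousAt (fun u : ℝ => u ^ 2 - 1) 1 := by fun_prop
      simpa using hc.tendsto
    · filter_upwards [self_mem_nhdsWithin] with u hu
      have hu' : (1 : ℝ) < u := hu
      simp only [mem_Ioi]
      nlinarith
  have h2 : Tendsto (fun u : ℝ => Real.log (u ^ 2 - 1)) (𝓝[>] (1 : ℝ)) atBot :=
    Real.tendsto_log_nhdsGT_zero.comp h1
  have h3 : Tendsto (fun u : ℝ => (1 / (p - 2)) * Real.log (u ^ 2 - 1)) (𝓝[>] (1 : ℝ))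
      atBot := h2.const_mul_atBot (by positivity)
  have h4 : Tendsto (fun u : ℝ => -((1 + 2 / (p - 2)) * Real.log u) - Lf p (s - u))
      (𝓝[>] (1 : ℝ))
      (𝓝 (-((1 + 2 / (p - 2)) * Real.log 1) - Lf p (s - 1))) := by
    apply Tendsto.mono_left _ nhdsWithin_le_nhds
    apply ContinuousAt.tendsto
    apply ContinuousAt.sub
    · exact ((Real.continuousAt_log one_ne_zero).const_mul _).neg
    · have hL : ContinuousAt (Lf p) (s - 1) :=
        (hasDerivAt_Lf p hp (by linarith : (1:ℝ) < s - 1)).continuousAt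
      have hin : ContinuousAt (fun u : ℝ => s - u) 1 := by fun_prop
      exact hL.comp hin
  have h5 := h3.atBot_add h4
  apply h5.congr
  intro u
  simp only [Gf, Lf]
  ring


lemma Q_decreasing {c X m1 m2 : ℝ} (hc : 1 < c) (h0 : 0 ≤ m1) (h12 : m1 < m2) :
    c * (X - 1) - (3 * c - 1) * m2 - m2 ^ 2 < c * (X - 1) - (3 * c - 1) * m1 - m1 ^ 2 := by
  nlinarith [mul_pos (show (0:ℝ) < m2 - m1 by linarith)
    (show (0:ℝ) < 3 * c - 1 + m1 + m2 by nlinarith)]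

lemma Q_quarter_nonneg {c s : ℝ} (hs2 : 2 < s) (hs4 : s ^ 2 ≤ 4 * c) :
    0 ≤ c * (s ^ 2 - 1) - (3 * c - 1) * (s ^ 2 / 4) - (s ^ 2 / 4) ^ 2 := by
  nlinarith [mul_nonneg (show (0:ℝ) ≤ s ^ 2 - 4 by nlinarith)
    (show (0:ℝ) ≤ 4 * c - s ^ 2 by linarith)]

lemma Q_quarter_neg {c s : ℝ} (hs2 : 2 < s) (hs4 : 4 * c < s ^ 2) :
    c * (s ^ 2 - 1) - (3 * c - 1) * (s ^ 2 / 4) - (s ^ 2 / 4) ^ 2 < 0 := by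
  nlinarith [mul_pos (show (0:ℝ) < s ^ 2 - 4 by nlinarith)
    (show (0:ℝ) < s ^ 2 - 4 * c by linarith)]

lemma Q_one_pos {c s : ℝ} (hc : 1 < c) (hs2 : 2 < s) :
    0 < c * (s ^ 2 - 1) - (3 * c - 1) * (1 * (s - 1)) - (1 * (s - 1)) ^ 2 := by
  nlinarith [mul_pos (mul_pos (show (0:ℝ) < s - 1 by linarith)
    (show (0:ℝ) < s - 2 by linarith)) (show (0:ℝ) < c - 1 by linarith)]

set_option maxHeartbeats 2000000 in
/-- for p > 2 and s > 0: (a) if s ≤ 2 the system has no solutions; (b) if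
`2 < s ≤ 2√(p/(p−2))` the only solution is `t₋ = t₊ = 2/s`; (c) if `s > 2√(p/(p−2))`
there are exactly three solutions: `t₋ = t₊ = 2/s` and a pair `(t₁,t₂)`, `(t₂,t₁)` with
`t₁ ≠ t₂`. -/
theorem signSys_trichotomy (p s : ℝ) (hp : 2 < p) (hs : 0 < s) :
    (s ≤ 2 → ¬ ∃ tm tp : ℝ, SignSys p s tm tp) ∧
    (2 < s → s ≤ 2 * Real.sqrt (p / (p - 2)) →
      ∀ tm tp : ℝ, SignSys p s tm tp ↔ (tm = 2 / s ∧ tp = 2 / s)) ∧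
    (2 * Real.sqrt (p / (p - 2)) < s →
      ∃ t₁ t₂ : ℝ, t₁ ≠ t₂ ∧ SignSys p s (2 / s) (2 / s) ∧
        SignSys p s t₁ t₂ ∧ SignSys p s t₂ t₁ ∧
        ∀ tm tp : ℝ, SignSys p s tm tp →
          (tm = 2 / s ∧ tp = 2 / s) ∨ (tm = t₁ ∧ tp = t₂) ∨ (tm = t₂ ∧ tp = t₁)) := by
  have hp2 : (0:ℝ) < p - 2 := by linarith
  have hc1 : 1 < 1 + 2 / (p - 2) := by
    have : (0:ℝ) < 2 / (p - 2) := by positivity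
    linarith
  have hcp : p / (p - 2) = 1 + 2 / (p - 2) := by field_simp; ring
  have hr1 : 1 < Real.sqrt (p / (p - 2)) := by
    rw [show (1:ℝ) = Real.sqrt 1 by simp]
    apply Real.sqrt_lt_sqrt (by norm_num)
    rw [hcp]; exact hc1
  have hrsq : Real.sqrt (p / (p - 2)) ^ 2 = 1 + 2 / (p - 2) := by
    rw [Real.sq_sqrt (by rw [hcp]; linarith), hcp]
  refine ⟨?_, ?_, ?_⟩
  · -- part (a)
    rintro hs2 ⟨tm, tp, h⟩
    rw [signSys_iff_u p s hp] at h
    obtain ⟨u, v, hu, hv, hsum, -, -, -⟩ := h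
    linarith
  · -- part (b)
    intro hs2 hsle tm tp
    have hs4 : s ^ 2 ≤ 4 * (1 + 2 / (p - 2)) := by
      have h1 : s ^ 2 ≤ (2 * Real.sqrt (p / (p - 2))) ^ 2 := by
        apply pow_le_pow_left₀ (le_of_lt hs) hsle
      calc s ^ 2 ≤ (2 * Real.sqrt (p / (p - 2))) ^ 2 := h1
        _ = 4 * (Real.sqrt (p / (p - 2)) ^ 2) := by ring
        _ = 4 * (1 + 2 / (p - 2)) := by rw [hrsq]
    have hQ : ∀ u, 1 < u → u < s / 2 →
        0 < (1 + 2 / (p - 2)) * (s ^ 2 - 1) - (3 * (1 + 2 / (p - 2)) - 1) * (u * (s - u)) -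
          (u * (s - u)) ^ 2 := by
      intro u h1 h2
      have hm1 : u * (s - u) < s ^ 2 / 4 := by
        nlinarith [mul_pos (show (0:ℝ) < s / 2 - u by linarith)
          (show (0:ℝ) < s / 2 - u by linarith)]
      have hm0 : 0 < u * (s - u) := mul_pos (by linarith) (by linarith)
      have hd := Q_decreasing (X := s ^ 2) hc1 (le_of_lt hm0) hm1
      have hq := Q_quarter_nonneg hs2 hs4
      linarith
    have hmono : StrictMonoOn (Gf p s) (Ioc 1 (s / 2)) :=
      Gf_strictMonoOn p s hp (by linarith) le_rfl hQ
    constructor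
    · intro hss
      rw [signSys_iff_u p s hp] at hss
      obtain ⟨u, v, hu, hv, hsum, hL, htm, htp⟩ := hss
      have key : u = v := by
        rcases lt_trichotomy u v with h | h | h
        · exfalso
          have hus : u < s / 2 := by linarith
          have hGu : Gf p s u = 0 := by
            unfold Gf; rw [show s - u = v by linarith, hL, sub_self]
          have := hmono (show u ∈ Ioc 1 (s/2) from ⟨hu, le_of_lt hus⟩)
            (show s/2 ∈ Ioc 1 (s/2) from ⟨by linarith, le_rfl⟩) hus
          rw [Gf_half, hGu] at this
          exact lt_irrefl 0 this
        · exact h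
        · exfalso
          have hvs : v < s / 2 := by linarith
          have hGv : Gf p s v = 0 := by
            unfold Gf; rw [show s - v = u by linarith, ← hL, sub_self]
          have := hmono (show v ∈ Ioc 1 (s/2) from ⟨hv, le_of_lt hvs⟩)
            (show s/2 ∈ Ioc 1 (s/2) from ⟨by linarith, le_rfl⟩) hvs
          rw [Gf_half, hGv] at this
          exact lt_irrefl 0 this
      have hu2 : u = s / 2 := by rw [key] at hsum ⊢; linarith
      have hv2 : v = s / 2 := by rw [← key]; exact hu2
      constructor
      · rw [htm, hu2, one_div_div]
      · rw [htp, hv2, one_div_div]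
    · rintro ⟨rfl, rfl⟩
      rw [signSys_iff_u p s hp]
      exact ⟨s / 2, s / 2, by linarith, by linarith, by ring, rfl,
        (one_div_div s 2).symm, (one_div_div s 2).symm⟩
  · -- part (c)
    intro hgt
    have hs2 : 2 < s := by nlinarith
    have hs4 : 4 * (1 + 2 / (p - 2)) < s ^ 2 := by
      have h1 : (2 * Real.sqrt (p / (p - 2))) ^ 2 < s ^ 2 := by
        apply pow_lt_pow_left₀ hgt (by positivity)
        norm_num
      calc 4 * (1 + 2 / (p - 2)) = 4 * (Real.sqrt (p / (p - 2)) ^ 2) := by rw [hrsq]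
        _ = (2 * Real.sqrt (p / (p - 2))) ^ 2 := by ring
        _ < s ^ 2 := h1
    set R : ℝ → ℝ := fun u =>
      (1 + 2 / (p - 2)) * (s ^ 2 - 1) - (3 * (1 + 2 / (p - 2)) - 1) * (u * (s - u)) -
        (u * (s - u)) ^ 2 with hRdef
    have hRcont : ContinuousOn R (Icc 1 (s / 2)) := by
      apply Continuous.continuousOn
      fun_prop
    have hR1 : 0 < R 1 := by simp only [hRdef]; exact Q_one_pos hc1 hs2
    have hRh : R (s / 2) < 0 := by
      simp only [hRdef]
      have := Q_quarter_neg (c := 1 + 2 / (p - 2)) hs2 hs4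
      nlinarith [this]
    obtain ⟨u₀, hu₀mem, hRu₀⟩ := intermediate_value_Ioo' (by linarith : (1:ℝ) ≤ s / 2)
      hRcont (show (0:ℝ) ∈ Ioo (R (s/2)) (R 1) from ⟨hRh, hR1⟩)
    have hu₀1 : 1 < u₀ := hu₀mem.1
    have hu₀h : u₀ < s / 2 := hu₀mem.2
    have hRu₀' : (1 + 2 / (p - 2)) * (s ^ 2 - 1) -
        (3 * (1 + 2 / (p - 2)) - 1) * (u₀ * (s - u₀)) - (u₀ * (s - u₀)) ^ 2 = 0 := hRu₀
    have hQpos : ∀ u, 1 < u → u < u₀ →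
        0 < (1 + 2 / (p - 2)) * (s ^ 2 - 1) - (3 * (1 + 2 / (p - 2)) - 1) * (u * (s - u)) -
          (u * (s - u)) ^ 2 := by
      intro u h1 h2
      have hmlt : u * (s - u) < u₀ * (s - u₀) := by
        nlinarith [mul_pos (show (0:ℝ) < u₀ - u by linarith)
          (show (0:ℝ) < s - u - u₀ by linarith)]
      have hm0 : 0 < u * (s - u) := mul_pos (by linarith) (by linarith)
      have hd := Q_decreasing (X := s ^ 2) hc1 (le_of_lt hm0) hmlt
      linarith
    have hQneg : ∀ u, u₀ < u → u < s / 2 →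
        (1 + 2 / (p - 2)) * (s ^ 2 - 1) - (3 * (1 + 2 / (p - 2)) - 1) * (u * (s - u)) -
          (u * (s - u)) ^ 2 < 0 := by
      intro u h1 h2
      have hmlt : u₀ * (s - u₀) < u * (s - u) := by
        nlinarith [mul_pos (show (0:ℝ) < u - u₀ by linarith)
          (show (0:ℝ) < s - u₀ - u by linarith)]
      have hm0 : 0 < u₀ * (s - u₀) := mul_pos (by linarith) (by linarith)
      have hd := Q_decreasing (X := s ^ 2) hc1 (le_of_lt hm0) hmlt
      linarith
    have hmono : StrictMonoOn (Gf p s) (Ioc 1 u₀) :=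
      Gf_strictMonoOn p s hp hu₀1 (le_of_lt hu₀h) hQpos
    have hanti : StrictAntiOn (Gf p s) (Icc u₀ (s / 2)) :=
      Gf_strictAntiOn p s hp hu₀1 (le_of_lt hu₀h) hs2 hQneg
    have hGpos : ∀ x, u₀ ≤ x → x < s / 2 → 0 < Gf p s x := by
      intro x hx1 hx2
      have := hanti (show x ∈ Icc u₀ (s/2) from ⟨hx1, le_of_lt hx2⟩)
        (show s/2 ∈ Icc u₀ (s/2) from ⟨le_of_lt hu₀h, le_rfl⟩) hx2
      rwa [Gf_half] at this
    obtain ⟨a, haG, ha2⟩ := (((Gf_tendsto_atBot p s hp hs2).eventually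
      (eventually_lt_atBot (0:ℝ))).and
      (eventually_of_mem (Ioo_mem_nhdsGT hu₀1)
        (fun x hx => hx))).exists
    have hGu₀ : 0 < Gf p s u₀ := hGpos u₀ le_rfl hu₀h
    have hGcont : ContinuousOn (Gf p s) (Icc a u₀) := by
      intro x hx
      have h1 : 1 < x := lt_of_lt_of_le ha2.1 hx.1
      have h2 : 1 < s - x := by have := hx.2; linarith
      exact ((hasDerivAt_Gf p s hp h1 h2).continuousAt).continuousWithinAt
    obtain ⟨u₁, hu₁mem, hGu₁⟩ := intermediate_value_Ioo (le_of_lt ha2.2) hGcont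
      (show (0:ℝ) ∈ Ioo (Gf p s a) (Gf p s u₀) from ⟨haG, hGu₀⟩)
    have hu₁1 : 1 < u₁ := lt_trans ha2.1 hu₁mem.1
    have hu₁u₀ : u₁ < u₀ := hu₁mem.2
    have hu₁h : u₁ < s / 2 := lt_trans hu₁u₀ hu₀h
    have hv₁ : 1 < s - u₁ := by linarith
    have hL₁ : Lf p (s - u₁) = Lf p u₁ := by
      have := hGu₁; unfold Gf at this; linarith
    refine ⟨1 / u₁, 1 / (s - u₁), ?_, ?_, ?_, ?_, ?_⟩
    · have h := one_div_lt_one_div_of_lt (by linarith : (0:ℝ) < u₁)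
        (by linarith : u₁ < s - u₁)
      exact ne_of_gt h
    · rw [signSys_iff_u p s hp]
      exact ⟨s / 2, s / 2, by linarith, by linarith, by ring, rfl,
        (one_div_div s 2).symm, (one_div_div s 2).symm⟩
    · rw [signSys_iff_u p s hp]
      exact ⟨u₁, s - u₁, hu₁1, hv₁, by ring, hL₁, rfl, rfl⟩
    · rw [signSys_iff_u p s hp]
      exact ⟨s - u₁, u₁, hv₁, hu₁1, by ring, hL₁.symm, rfl, rfl⟩
    · intro tm tp hss
      rw [signSys_iff_u p s hp] at hss
      obtain ⟨u, v, hu, hv, hsum, hL, htm, htp⟩ := hss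
      rcases lt_trichotomy u v with h | h | h
      · -- u < v : (tm, tp) = (t₁, t₂)
        right; left
        have hus : u < s / 2 := by linarith
        have hGu : Gf p s u = 0 := by
          unfold Gf; rw [show s - u = v by linarith, hL, sub_self]
        have hule : u ≤ u₀ := by
          by_contra hcon
          push_neg at hcon
          have := hGpos u (le_of_lt hcon) hus
          rw [hGu] at this
          exact lt_irrefl 0 this
        have huu₁ : u = u₁ := by
          apply hmono.injOn (show u ∈ Ioc 1 u₀ from ⟨hu, hule⟩)
            (show u₁ ∈ Ioc 1 u₀ from ⟨hu₁1, le_of_lt hu₁u₀⟩)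
          rw [hGu, hGu₁]
        constructor
        · rw [htm, huu₁]
        · rw [htp, show v = s - u₁ by rw [← huu₁]; linarith]
      · -- u = v : diagonal
        left
        have hu2 : u = s / 2 := by rw [h] at hsum; linarith
        have hv2 : v = s / 2 := by rw [← h]; exact hu2
        constructor
        · rw [htm, hu2, one_div_div]
        · rw [htp, hv2, one_div_div]
      · -- v < u : (tm, tp) = (t₂, t₁)
        right; right
        have hvs : v < s / 2 := by linarith
        have hGv : Gf p s v = 0 := by
          unfold Gf; rw [show s - v = u by linarith, ← hL, sub_self]
        have hvle : v ≤ u₀ := by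
          by_contra hcon
          push_neg at hcon
          have := hGpos v (le_of_lt hcon) hvs
          rw [hGv] at this
          exact lt_irrefl 0 this
        have hvu₁ : v = u₁ := by
          apply hmono.injOn (show v ∈ Ioc 1 u₀ from ⟨hv, hvle⟩)
            (show u₁ ∈ Ioc 1 u₀ from ⟨hu₁1, le_of_lt hu₁u₀⟩)
          rw [hGv, hGu₁]
        constructor
        · rw [htm, show u = s - u₁ by rw [← hvu₁]; linarith]
        · rw [htp, hvu₁]
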